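/- arXiv:1501.05369 — 5 statements merged into one kernel-verified Lean document; each statement's English description precedes it below -/
import Mathlib

section
/- Let H be a Hilbert space, f, g ∈ H, T₁ = T₁*, T₂ = T₂* ∈ B(H), and λ₁, λ₂ ∈ ℝ. The self-adjoint operators a = ℓ(f) + ℓ(f)* + Λ_ℓ(T₁) + λ₁·1 and b = r(g) + r(g)* + Λ_r(T₂) + λ₂·1 on the full Fock space F(H) commute if and only if Im⟨f,g⟩ = 0, T₁g = T₂f, and T₁T₂ = T₂T₁. -/
/-- An abstract realization of the full Fock space `F(H) = ℂΩ ⊕ ⨁_{n ≥ 1} H^{⊗n}`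
over a complex Hilbert space `H`, encoded through the elementary tensors
`vec [ξ₁, …, ξₙ] = ξ₁ ⊗ ⋯ ⊗ ξₙ` (with `vec [] = Ω` the vacuum vector). -/
structure FockRealization (H : Type*) [NormedAddCommGroup H] [InnerProductSpace ℂ H]
    (F : Type*) [NormedAddCommGroup F] [InnerProductSpace ℂ F] [CompleteSpace F] where
  vec : List H → F
  inner_vec : ∀ xs ys : List H,
    (inner ℂ (vec xs) (vec ys) : ℂ) =
      if xs.length = ys.length
        then ((xs.zip ys).map (fun p => (inner ℂ p.1 p.2 : ℂ))).prod
        else 0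
  dense_span : Dense ((Submodule.span ℂ (Set.range vec) : Submodule ℂ F) : Set F)


open scoped ComplexConjugate

local notation "⟪" x ", " y "⟫" => @inner ℂ _ _ x y

section Aux

variable {H : Type*} [NormedAddCommGroup H] [InnerProductSpace ℂ H]
variable {F : Type*} [NormedAddCommGroup F] [InnerProductSpace ℂ F] [CompleteSpace F]

lemma fock_inner_nil_nil (e : List H → F)
    (hi : ∀ xs ys : List H, ⟪e xs, e ys⟫ =
      if xs.length = ys.length
        then ((xs.zip ys).map (fun p => (inner ℂ p.1 p.2 : ℂ))).prod else 0) :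
    ⟪e ([] : List H), e ([] : List H)⟫ = 1 := by rw [hi]; simp

lemma fock_inner_nil_cons (e : List H → F)
    (hi : ∀ xs ys : List H, ⟪e xs, e ys⟫ =
      if xs.length = ys.length
        then ((xs.zip ys).map (fun p => (inner ℂ p.1 p.2 : ℂ))).prod else 0)
    (y : H) (ys : List H) : ⟪e ([] : List H), e (y :: ys)⟫ = 0 := by simp [hi]

lemma fock_inner_cons_nil (e : List H → F)
    (hi : ∀ xs ys : List H, ⟪e xs, e ys⟫ =
      if xs.length = ys.length
        then ((xs.zip ys).map (fun p => (inner ℂ p.1 p.2 : ℂ))).prod else 0)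
    (x : H) (xs : List H) : ⟪e (x :: xs), e ([] : List H)⟫ = 0 := by simp [hi]

lemma fock_inner_cons_cons (e : List H → F)
    (hi : ∀ xs ys : List H, ⟪e xs, e ys⟫ =
      if xs.length = ys.length
        then ((xs.zip ys).map (fun p => (inner ℂ p.1 p.2 : ℂ))).prod else 0)
    (x : H) (xs : List H) (y : H) (ys : List H) :
    ⟪e (x :: xs), e (y :: ys)⟫ = ⟪x, y⟫ * ⟪e xs, e ys⟫ := by
  rw [hi, hi]
  by_cases h : xs.length = ys.length <;> simp [h]

lemma fock_inner_concat_concat (e : List H → F)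
    (hi : ∀ xs ys : List H, ⟪e xs, e ys⟫ =
      if xs.length = ys.length
        then ((xs.zip ys).map (fun p => (inner ℂ p.1 p.2 : ℂ))).prod else 0)
    (xs : List H) (x : H) (ys : List H) (y : H) :
    ⟪e (xs ++ [x]), e (ys ++ [y])⟫ = ⟪x, y⟫ * ⟪e xs, e ys⟫ := by
  rw [hi, hi]
  by_cases h : xs.length = ys.length
  · rw [List.zip_append h]
    simp [h, mul_comm]
  · simp [h]

lemma fock_inner_nil_concat (e : List H → F)
    (hi : ∀ xs ys : List H, ⟪e xs, e ys⟫ =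
      if xs.length = ys.length
        then ((xs.zip ys).map (fun p => (inner ℂ p.1 p.2 : ℂ))).prod else 0)
    (ys : List H) (y : H) : ⟪e ([] : List H), e (ys ++ [y])⟫ = 0 := by
  rw [hi]
  have : ([] : List H).length ≠ (ys ++ [y]).length := by simp
  simp [this]

lemma fock_ext_inner (e : List H → F)
    (hd : Dense ((Submodule.span ℂ (Set.range e) : Submodule ℂ F) : Set F))
    (u v : F) (h : ∀ ys : List H, ⟪u, e ys⟫ = ⟪v, e ys⟫) : u = v := by
  rw [← sub_eq_zero]
  have hbot : (Submodule.span ℂ (Set.range e))ᗮ = ⊥ := by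
    rw [← Submodule.topologicalClosure_eq_top_iff]
    exact Submodule.dense_iff_topologicalClosure_eq_top.mp hd
  have hmem : u - v ∈ (Submodule.span ℂ (Set.range e))ᗮ := by
    rw [Submodule.mem_orthogonal']
    intro w hw
    induction hw using Submodule.span_induction with
    | mem w hw =>
      obtain ⟨ys, rfl⟩ := hw
      rw [inner_sub_left, h ys, sub_self]
    | zero => simp
    | add _ _ _ _ h1 h2 => rw [inner_add_right, h1, h2, add_zero]
    | smul c _ _ h1 => rw [inner_smul_right, h1, mul_zero]
  rw [hbot] at hmem
  simpa using hmem

end Aux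

/-- with `ℓ(f)`, `r(g)` the left/right creation operators and
`Λ_ℓ(T₁)`, `Λ_r(T₂)` the left/right gauge operators on the full Fock space
(`T₁ = T₁*`, `T₂ = T₂*` bounded on `H`), and `λ₁, λ₂ ∈ ℝ`, the self-adjoint
operators `a = ℓ(f) + ℓ(f)* + Λ_ℓ(T₁) + λ₁·1` and `b = r(g) + r(g)* + Λ_r(T₂) + λ₂·1`
commute iff `Im⟨f,g⟩ = 0`, `T₁g = T₂f` and `T₁T₂ = T₂T₁`.
(`⟨f,g⟩` is the inner product linear in `f`, i.e. `inner g f` in Mathlib.) -/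
theorem stmt2 {H : Type*} [NormedAddCommGroup H] [InnerProductSpace ℂ H] [CompleteSpace H]
    {F : Type*} [NormedAddCommGroup F] [InnerProductSpace ℂ F] [CompleteSpace F]
    (fock : FockRealization H F) (f g : H)
    (T₁ T₂ : H →L[ℂ] H) (hT₁ : IsSelfAdjoint T₁) (hT₂ : IsSelfAdjoint T₂)
    (lam₁ lam₂ : ℝ)
    (L R Gl Gr : F →L[ℂ] F)
    (hL : ∀ xs : List H, L (fock.vec xs) = fock.vec (f :: xs))
    (hR : ∀ xs : List H, R (fock.vec xs) = fock.vec (xs ++ [g]))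
    (hGl0 : Gl (fock.vec []) = 0)
    (hGl : ∀ (x : H) (xs : List H), Gl (fock.vec (x :: xs)) = fock.vec (T₁ x :: xs))
    (hGr0 : Gr (fock.vec []) = 0)
    (hGr : ∀ (xs : List H) (x : H), Gr (fock.vec (xs ++ [x])) = fock.vec (xs ++ [T₂ x]))
    (a b : F →L[ℂ] F)
    (ha : a = L + ContinuousLinearMap.adjoint L + Gl + (lam₁ : ℂ) • (1 : F →L[ℂ] F))
    (hb : b = R + ContinuousLinearMap.adjoint R + Gr + (lam₂ : ℂ) • (1 : F →L[ℂ] F)) :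
    a ∘L b = b ∘L a ↔
      ((inner ℂ g f : ℂ).im = 0 ∧ T₁ g = T₂ f ∧ T₁ ∘L T₂ = T₂ ∘L T₁) := by
  
  obtain ⟨e, hi, hd⟩ := fock
  have ext2 : ∀ u v : F, (∀ ys : List H, ⟪u, e ys⟫ = ⟪v, e ys⟫) → u = v :=
    fun u v h => fock_ext_inner e hd u v h
  have inn := fock_inner_nil_nil e hi
  have inc := fock_inner_nil_cons e hi
  have icn := fock_inner_cons_nil e hi
  have icc := fock_inner_cons_cons e hi
  have iqq := fock_inner_concat_concat e hi
  have inq := fock_inner_nil_concat e hi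
  -- adjoint formulas
  have hLs0 : ContinuousLinearMap.adjoint L (e []) = 0 := by
    apply ext2; intro ys
    rw [ContinuousLinearMap.adjoint_inner_left, hL, inc, inner_zero_left]
  have hLs : ∀ (x : H) (xs : List H),
      ContinuousLinearMap.adjoint L (e (x :: xs)) = (⟪f, x⟫ : ℂ) • e xs := by
    intro x xs; apply ext2; intro ys
    rw [ContinuousLinearMap.adjoint_inner_left, hL, icc, inner_smul_left, inner_conj_symm]
  have hRs0 : ContinuousLinearMap.adjoint R (e []) = 0 := by
    apply ext2; intro ys
    rw [ContinuousLinearMap.adjoint_inner_left, hR, inq, inner_zero_left]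
  have hRs : ∀ (xs : List H) (x : H),
      ContinuousLinearMap.adjoint R (e (xs ++ [x])) = (⟪g, x⟫ : ℂ) • e xs := by
    intro xs x; apply ext2; intro ys
    rw [ContinuousLinearMap.adjoint_inner_left, hR, iqq, inner_smul_left, inner_conj_symm]
  -- action of a
  have haN : a (e []) = e [f] + (lam₁ : ℂ) • e [] := by
    simp only [ha, ContinuousLinearMap.add_apply, ContinuousLinearMap.smul_apply,
      ContinuousLinearMap.one_apply, hL, hGl0, hLs0, add_zero]
  have haC : ∀ (x : H) (xs : List H), a (e (x :: xs)) =
      e (f :: x :: xs) + (⟪f, x⟫ : ℂ) • e xs + e (T₁ x :: xs)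
        + (lam₁ : ℂ) • e (x :: xs) := by
    intro x xs
    simp only [ha, ContinuousLinearMap.add_apply, ContinuousLinearMap.smul_apply,
      ContinuousLinearMap.one_apply, hL, hGl, hLs]
  -- action of b
  have hbN : b (e []) = e [g] + (lam₂ : ℂ) • e [] := by
    have h1 := hR []
    simp only [List.nil_append] at h1
    simp only [hb, ContinuousLinearMap.add_apply, ContinuousLinearMap.smul_apply,
      ContinuousLinearMap.one_apply, h1, hGr0, hRs0, add_zero]
  have hbC : ∀ (xs : List H) (x : H), b (e (xs ++ [x])) =
      e (xs ++ [x, g]) + (⟪g, x⟫ : ℂ) • e xs + e (xs ++ [T₂ x])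
        + (lam₂ : ℂ) • e (xs ++ [x]) := by
    intro xs x
    have h1 := hR (xs ++ [x])
    rw [List.append_assoc] at h1
    simp only [List.cons_append, List.nil_append] at h1
    simp only [hb, ContinuousLinearMap.add_apply, ContinuousLinearMap.smul_apply,
      ContinuousLinearMap.one_apply, h1, hGr, hRs]
  have hb1 : ∀ x : H, b (e [x]) =
      e [x, g] + (⟪g, x⟫ : ℂ) • e [] + e [T₂ x] + (lam₂ : ℂ) • e [x] :=
    fun x => by simpa using hbC [] x
  have hb2 : ∀ x y : H, b (e [x, y]) =
      e [x, y, g] + (⟪g, y⟫ : ℂ) • e [x] + e [x, T₂ y] + (lam₂ : ℂ) • e [x, y] :=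
    fun x y => by simpa using hbC [x] y
  have hbG : ∀ (x : H) (zs : List H) (y : H), b (e (x :: (zs ++ [y]))) =
      e (x :: (zs ++ [y, g])) + (⟪g, y⟫ : ℂ) • e (x :: zs) + e (x :: (zs ++ [T₂ y]))
        + (lam₂ : ℂ) • e (x :: (zs ++ [y])) :=
    fun x zs y => by simpa using hbC (x :: zs) y
  have hbGG : ∀ (x₁ x₂ : H) (zs : List H) (y : H), b (e (x₁ :: x₂ :: (zs ++ [y]))) =
      e (x₁ :: x₂ :: (zs ++ [y, g])) + (⟪g, y⟫ : ℂ) • e (x₁ :: x₂ :: zs)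
        + e (x₁ :: x₂ :: (zs ++ [T₂ y])) + (lam₂ : ℂ) • e (x₁ :: x₂ :: (zs ++ [y])) :=
    fun x₁ x₂ zs y => by simpa using hbC (x₁ :: x₂ :: zs) y
  constructor
  · intro hcomm
    have hv : ∀ xs : List H, a (b (e xs)) = b (a (e xs)) := fun xs => by
      have := congrArg (fun m : F →L[ℂ] F => m (e xs)) hcomm
      simpa using this
    have h0 := hv []
    simp only [hbN, haN, haC, hb1, map_add, map_smul] at h0
    have key1 : (⟪f, g⟫ : ℂ) = ⟪g, f⟫ := by
      have h0' := congrArg (fun v => (⟪e ([] : List H), v⟫ : ℂ)) h0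
      simp only [inner_add_right, inner_smul_right, inn, inc, icn, icc,
        mul_one, mul_zero, zero_mul, add_zero, zero_add] at h0'
      linear_combination h0'
    have him : (⟪g, f⟫ : ℂ).im = 0 := by
      have : (starRingEnd ℂ) ⟪g, f⟫ = ⟪g, f⟫ := by rw [inner_conj_symm, key1]
      exact Complex.conj_eq_iff_im.mp this
    have key2 : T₁ g = T₂ f := by
      have hscal : ∀ k : H, (⟪k, T₁ g⟫ : ℂ) = ⟪k, T₂ f⟫ := by
        intro k
        have h0' := congrArg (fun v => (⟪e [k], v⟫ : ℂ)) h0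
        simp only [inner_add_right, inner_smul_right, inn, inc, icn, icc,
          mul_one, mul_zero, zero_mul, add_zero, zero_add] at h0'
        linear_combination h0'
      have h2 : (⟪T₁ g - T₂ f, T₁ g - T₂ f⟫ : ℂ) = 0 := by
        rw [inner_sub_right, hscal, sub_self]
      exact sub_eq_zero.mp (inner_self_eq_zero.mp h2)
    refine ⟨him, key2, ?_⟩
    ext x
    simp only [ContinuousLinearMap.comp_apply]
    have h1 := hv [x]
    simp only [hb1, hb2, hbN, haN, haC, map_add, map_smul] at h1
    have hscal : ∀ k : H, (⟪k, T₁ (T₂ x)⟫ : ℂ) = ⟪k, T₂ (T₁ x)⟫ := by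
      intro k
      have h1' := congrArg (fun v => (⟪e [k], v⟫ : ℂ)) h1
      simp only [inner_add_right, inner_smul_right, inn, inc, icn, icc,
        mul_one, mul_zero, zero_mul, add_zero, zero_add] at h1'
      linear_combination h1'
    have h2 : (⟪T₁ (T₂ x) - T₂ (T₁ x), T₁ (T₂ x) - T₂ (T₁ x)⟫ : ℂ) = 0 := by
      rw [inner_sub_right, hscal, sub_self]
    exact sub_eq_zero.mp (inner_self_eq_zero.mp h2)
  · rintro ⟨him, hTgf, hcomm⟩
    have hfg : (⟪f, g⟫ : ℂ) = ⟪g, f⟫ := by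
      rw [← inner_conj_symm f g]
      exact Complex.conj_eq_iff_im.mpr him
    have hc : ∀ x, T₁ (T₂ x) = T₂ (T₁ x) := fun x => by
      have := congrArg (fun m : H →L[ℂ] H => m x) hcomm
      simpa using this
    have hpair : ∀ x : H, (⟪f, T₂ x⟫ : ℂ) = ⟪g, T₁ x⟫ := by
      intro x
      have e1 : (⟪f, T₂ x⟫ : ℂ) = ⟪T₂ f, x⟫ := by
        conv_lhs => rw [← hT₂.adjoint_eq]
        exact ContinuousLinearMap.adjoint_inner_right T₂ f x
      rw [e1, ← hTgf]
      conv_lhs => rw [← hT₁.adjoint_eq]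
      exact ContinuousLinearMap.adjoint_inner_left T₁ x g
    apply ContinuousLinearMap.ext_on hd
    rintro v ⟨xs, rfl⟩
    simp only [ContinuousLinearMap.comp_apply]
    match xs with
    | [] =>
      simp only [hbN, haN, haC, hb1, map_add, map_smul, hTgf, hfg]
      module
    | x :: rest =>
      rcases rest.eq_nil_or_concat with rfl | ⟨zs, y, rfl⟩
      · simp only [hb1, hb2, hbN, haN, haC, map_add, map_smul, hc, hpair]
        module
      · simp only [List.concat_eq_append] 
        simp only [hbG, hbGG, hbC, haC, map_add, map_smul]
        module
end

section
/- Let R = {R_{m,n}}, indexed by (m,n) ∈ ℤ₊² \ {(0,0)}, be a real 2-sequence that is conditionally positive semi-definite. If R_{2,0} = 0, then R_{m,n} = 0 for all (m,n) with m + n ≥ 2 and m ≥ 1. -/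
/-- The sesquilinear form `[p, q]_R` on polynomials in two commuting variables
with vanishing constant term, where a polynomial is encoded by its finitely
supported coefficient function on exponents `(m,n) ∈ ℤ₊²` (the value at `(0,0)`
being `0`): `[s^{m₁}t^{n₁}, s^{m₂}t^{n₂}]_R = R_{m₁+m₂, n₁+n₂}`, extended
linearly in the first argument and conjugate-linearly in the second. -/
noncomputable def condForm (R : ℕ × ℕ → ℝ) (c d : (ℕ × ℕ) →₀ ℂ) : ℂ :=
  ∑ j ∈ c.support, ∑ k ∈ d.support,
    c j * (starRingEnd ℂ) (d k) * ((R (j.1 + k.1, j.2 + k.2) : ℝ) : ℂ)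

lemma condForm_subset (R : ℕ × ℕ → ℝ) (c : (ℕ × ℕ) →₀ ℂ) (S : Finset (ℕ × ℕ))
    (hS : c.support ⊆ S) :
    condForm R c c = ∑ j ∈ S, ∑ k ∈ S,
      c j * (starRingEnd ℂ) (c k) * ((R (j.1 + k.1, j.2 + k.2) : ℝ) : ℂ) := by
  unfold condForm
  rw [Finset.sum_subset hS]
  · refine Finset.sum_congr rfl fun j _ => ?_
    refine Finset.sum_subset hS fun k _ hk => ?_
    have : c k = 0 := Finsupp.notMem_support_iff.mp hk
    simp [this]
  · intro j _ hj
    have : c j = 0 := Finsupp.notMem_support_iff.mp hj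
    simp [this]

/-- if the real 2-sequence `R = {R_{m,n}}_{(m,n) ≠ (0,0)}` is
conditionally positive semi-definite (`[p,p]_R ≥ 0` for all `p ∈ C₀[s,t]`) and
`R_{2,0} = 0`, then `R_{m,n} = 0` whenever `m + n ≥ 2` and `m ≥ 1`. -/
theorem stmt5 (R : ℕ × ℕ → ℝ)
    (hpsd : ∀ c : (ℕ × ℕ) →₀ ℂ, c (0, 0) = 0 → 0 ≤ (condForm R c c).re)
    (h20 : R (2, 0) = 0) :
    ∀ m n : ℕ, 2 ≤ m + n → 1 ≤ m → R (m, n) = 0 := by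
  intro m n hmn hm
  by_cases hc : ((m - 1, n) : ℕ × ℕ) = (1, 0)
  · simp only [Prod.mk.injEq] at hc
    obtain ⟨h1, h2⟩ := hc
    have hm2 : m = 2 := by omega
    rw [hm2, h2]; exact h20
  · set a : ℕ × ℕ := (1, 0) with ha
    set b : ℕ × ℕ := (m - 1, n) with hb
    have hab : a ≠ b := fun h => hc (h ▸ rfl)
    have hb0 : b ≠ (0, 0) := by
      rw [hb]
      intro h
      have h1 := congrArg Prod.fst h
      have h2 := congrArg Prod.snd h
      simp only at h1 h2
      omega
    have key : ∀ t : ℝ, 0 ≤ 2 * t * R (m, n) + R (m - 1 + (m - 1), n + n) := by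
      intro t
      set c : (ℕ × ℕ) →₀ ℂ := Finsupp.single a (t : ℂ) + Finsupp.single b 1 with hcdef
      have hca : c a = t := by
        simp [hcdef, Finsupp.single_apply, hab, Ne.symm hab]
      have hcb : c b = 1 := by
        simp [hcdef, Finsupp.single_apply, hab, Ne.symm hab]
      have hsupp : c.support ⊆ {a, b} := by
        intro j hj
        simp only [Finset.mem_insert, Finset.mem_singleton]
        by_contra h
        push_neg at h
        have : c j = 0 := by
          simp [hcdef, Finsupp.single_apply, Ne.symm h.1, Ne.symm h.2]
        exact Finsupp.notMem_support_iff.mpr this hj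
      have hc00 : c (0, 0) = 0 := by
        have hz : ((0, 0) : ℕ × ℕ) = 0 := rfl
        have ha0 : a ≠ 0 := by rw [ha]; intro h; exact one_ne_zero (congrArg Prod.fst h)
        have hb0' : b ≠ 0 := by rw [← hz]; exact hb0
        rw [hz]
        simp [hcdef, Finsupp.single_apply, ha0, hb0']
      have hexp : condForm R c c =
          ((t * t * R (2, 0) + t * R (m, n) + t * R (m, n)
            + R (m - 1 + (m - 1), n + n) : ℝ) : ℂ) := by
        rw [condForm_subset R c {a, b} hsupp]
        rw [Finset.sum_pair hab, Finset.sum_pair hab, Finset.sum_pair hab]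
        have h1 : a.1 + a.1 = 2 := rfl
        have h2 : a.2 + a.2 = 0 := rfl
        have h3 : a.1 + b.1 = m := by simp [ha, hb]; omega
        have h4 : a.2 + b.2 = n := by simp [ha, hb]
        have h5 : b.1 + a.1 = m := by simp [ha, hb]; omega
        have h6 : b.2 + a.2 = n := by simp [ha, hb]
        rw [hca, hcb, h1, h2, h3, h4, h5, h6]
        push_cast
        ring_nf
        simp [Complex.conj_ofReal]
        ring
      have := hpsd c hc00
      rw [hexp] at this
      rw [Complex.ofReal_re] at this
      rw [h20] at this
      linarith
    set A := R (m, n) with hA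
    set B := R (m - 1 + (m - 1), n + n) with hB
    by_contra hAne
    have ht := key ((-B - 1) / (2 * A))
    have h2A : 2 * A ≠ 0 := by
      simp only [mul_ne_zero_iff]; exact ⟨two_ne_zero, hAne⟩
    have : 2 * ((-B - 1) / (2 * A)) * A = -B - 1 := by
      field_simp
    rw [this] at ht
    linarith
end

section
/- Let R = {R_{m,n}}, (m,n) ∈ ℤ₊² \ {(0,0)}, be a real 2-sequence that is conditionally positive semi-definite and conditionally bounded with constant L. Then the set I = {p ∈ C₀[s,t] : [p,p]_R = 0} is an ideal of the (non-unital) algebra C₀[s,t], and the form [·,·]_R descends to a well-defined inner product on the quotient vector space C₀[s,t]/I. -/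
open MvPolynomial

/-- The sesquilinear form `[·,·]_R` on `ℂ[s,t]` (polynomials in two commuting
variables) induced by a real 2-sequence `R`:
`[s^{m₁}t^{n₁}, s^{m₂}t^{n₂}]_R = R_{m₁+m₂, n₁+n₂}`, extended linearly in the
first argument and conjugate-linearly in the second. -/
noncomputable def polyForm (R : ℕ × ℕ → ℝ) (p q : MvPolynomial (Fin 2) ℂ) : ℂ :=
  ∑ d ∈ p.support, ∑ e ∈ q.support,
    MvPolynomial.coeff d p * (starRingEnd ℂ) (MvPolynomial.coeff e q) *
      ((R (d 0 + e 0, d 1 + e 1) : ℝ) : ℂ)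

/-- Membership in `C₀[s,t]`: vanishing constant term. -/
def memC0 (p : MvPolynomial (Fin 2) ℂ) : Prop := MvPolynomial.constantCoeff p = 0


noncomputable def Lfun (R : ℕ × ℕ → ℝ) (f : MvPolynomial (Fin 2) ℂ) : ℂ :=
  ∑ d ∈ f.support, MvPolynomial.coeff d f * ((R (d 0, d 1) : ℝ) : ℂ)

lemma Lfun_eq_sum (R : ℕ × ℕ → ℝ) {f : MvPolynomial (Fin 2) ℂ} {A : Finset (Fin 2 →₀ ℕ)}
    (h : f.support ⊆ A) :
    Lfun R f = ∑ d ∈ A, MvPolynomial.coeff d f * ((R (d 0, d 1) : ℝ) : ℂ) :=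
  Finset.sum_subset h (fun d _ hd => by
    rw [MvPolynomial.notMem_support_iff.mp hd]; ring)

lemma Lfun_add (R : ℕ × ℕ → ℝ) (f g : MvPolynomial (Fin 2) ℂ) :
    Lfun R (f + g) = Lfun R f + Lfun R g := by
  rw [Lfun_eq_sum R (A := f.support ∪ g.support) MvPolynomial.support_add,
      Lfun_eq_sum R (A := f.support ∪ g.support) Finset.subset_union_left,
      Lfun_eq_sum R (A := f.support ∪ g.support) Finset.subset_union_right,
      ← Finset.sum_add_distrib]
  exact Finset.sum_congr rfl fun d _ => by rw [MvPolynomial.coeff_add]; ring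

lemma Lfun_monomial (R : ℕ × ℕ → ℝ) (u : Fin 2 →₀ ℕ) (c : ℂ) :
    Lfun R (monomial u c) = c * ((R (u 0, u 1) : ℝ) : ℂ) := by
  rcases eq_or_ne c 0 with rfl | hc
  · simp [Lfun]
  · rw [Lfun, support_monomial, if_neg hc, Finset.sum_singleton, coeff_monomial, if_pos rfl]

lemma polyForm_eq_sum (R : ℕ × ℕ → ℝ) {p q : MvPolynomial (Fin 2) ℂ}
    {A B : Finset (Fin 2 →₀ ℕ)} (hA : p.support ⊆ A) (hB : q.support ⊆ B) :
    polyForm R p q = ∑ d ∈ A, ∑ e ∈ B,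
      MvPolynomial.coeff d p * (starRingEnd ℂ) (MvPolynomial.coeff e q) *
        ((R (d 0 + e 0, d 1 + e 1) : ℝ) : ℂ) := by
  unfold polyForm
  have h1 : (∑ d ∈ p.support, ∑ e ∈ q.support,
      MvPolynomial.coeff d p * (starRingEnd ℂ) (MvPolynomial.coeff e q) *
        ((R (d 0 + e 0, d 1 + e 1) : ℝ) : ℂ)) = ∑ d ∈ A, ∑ e ∈ q.support,
      MvPolynomial.coeff d p * (starRingEnd ℂ) (MvPolynomial.coeff e q) *
        ((R (d 0 + e 0, d 1 + e 1) : ℝ) : ℂ) :=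
    Finset.sum_subset hA (fun d _ hd => Finset.sum_eq_zero fun e _ => by
      rw [MvPolynomial.notMem_support_iff.mp hd]; ring)
  rw [h1]
  exact Finset.sum_congr rfl fun d _ => Finset.sum_subset hB (fun e _ he => by
    rw [MvPolynomial.notMem_support_iff.mp he]; simp)

lemma polyForm_add_left (R : ℕ × ℕ → ℝ) (p q r : MvPolynomial (Fin 2) ℂ) :
    polyForm R (p + q) r = polyForm R p r + polyForm R q r := by
  rw [polyForm_eq_sum R (A := p.support ∪ q.support) (B := r.support)
        MvPolynomial.support_add subset_rfl,
      polyForm_eq_sum R (A := p.support ∪ q.support) (B := r.support)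
        Finset.subset_union_left subset_rfl,
      polyForm_eq_sum R (A := p.support ∪ q.support) (B := r.support)
        Finset.subset_union_right subset_rfl,
      ← Finset.sum_add_distrib]
  refine Finset.sum_congr rfl fun d _ => ?_
  rw [← Finset.sum_add_distrib]
  exact Finset.sum_congr rfl fun e _ => by rw [MvPolynomial.coeff_add]; ring

lemma polyForm_add_right (R : ℕ × ℕ → ℝ) (p q r : MvPolynomial (Fin 2) ℂ) :
    polyForm R p (q + r) = polyForm R p q + polyForm R p r := by
  rw [polyForm_eq_sum R (A := p.support) (B := q.support ∪ r.support)
        subset_rfl MvPolynomial.support_add,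
      polyForm_eq_sum R (A := p.support) (B := q.support ∪ r.support)
        subset_rfl Finset.subset_union_left,
      polyForm_eq_sum R (A := p.support) (B := q.support ∪ r.support)
        subset_rfl Finset.subset_union_right,
      ← Finset.sum_add_distrib]
  refine Finset.sum_congr rfl fun d _ => ?_
  rw [← Finset.sum_add_distrib]
  refine Finset.sum_congr rfl fun e _ => ?_
  rw [MvPolynomial.coeff_add, map_add]; ring

lemma polyForm_smul_left (R : ℕ × ℕ → ℝ) (c : ℂ) (p q : MvPolynomial (Fin 2) ℂ) :
    polyForm R (c • p) q = c * polyForm R p q := by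
  rw [polyForm_eq_sum R (A := p.support) (B := q.support)
        MvPolynomial.support_smul subset_rfl, polyForm, Finset.mul_sum]
  refine Finset.sum_congr rfl fun d _ => ?_
  rw [Finset.mul_sum]
  refine Finset.sum_congr rfl fun e _ => ?_
  rw [MvPolynomial.coeff_smul, smul_eq_mul]; ring

lemma polyForm_smul_right (R : ℕ × ℕ → ℝ) (c : ℂ) (p q : MvPolynomial (Fin 2) ℂ) :
    polyForm R p (c • q) = (starRingEnd ℂ) c * polyForm R p q := by
  rw [polyForm_eq_sum R (A := p.support) (B := q.support)
        subset_rfl MvPolynomial.support_smul, polyForm, Finset.mul_sum]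
  refine Finset.sum_congr rfl fun d _ => ?_
  rw [Finset.mul_sum]
  refine Finset.sum_congr rfl fun e _ => ?_
  rw [MvPolynomial.coeff_smul, smul_eq_mul, map_mul]; ring

lemma polyForm_zero_left (R : ℕ × ℕ → ℝ) (q : MvPolynomial (Fin 2) ℂ) :
    polyForm R 0 q = 0 := by simp [polyForm]

lemma polyForm_conj (R : ℕ × ℕ → ℝ) (p q : MvPolynomial (Fin 2) ℂ) :
    polyForm R q p = (starRingEnd ℂ) (polyForm R p q) := by
  unfold polyForm
  rw [map_sum, Finset.sum_comm]
  refine Finset.sum_congr rfl fun d _ => ?_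
  rw [map_sum]
  refine Finset.sum_congr rfl fun e _ => ?_
  simp only [map_mul, Complex.conj_conj, Complex.conj_ofReal]
  rw [add_comm (e 0) (d 0), add_comm (e 1) (d 1)]
  ring

lemma polyForm_eq_Lfun (R : ℕ × ℕ → ℝ) (p q : MvPolynomial (Fin 2) ℂ) :
    polyForm R p q = Lfun R (p * MvPolynomial.map (starRingEnd ℂ) q) := by
  induction p using MvPolynomial.induction_on' with
  | add p₁ p₂ ih1 ih2 => rw [polyForm_add_left, add_mul, Lfun_add, ih1, ih2]
  | monomial u a =>
    induction q using MvPolynomial.induction_on' with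
    | add q₁ q₂ ih1 ih2 => rw [polyForm_add_right, map_add, mul_add, Lfun_add, ih1, ih2]
    | monomial v b =>
      rw [MvPolynomial.map_monomial, MvPolynomial.monomial_mul, Lfun_monomial]
      rcases eq_or_ne a 0 with rfl | ha
      · simp [polyForm]
      rcases eq_or_ne b 0 with rfl | hb
      · simp [polyForm]
      · rw [polyForm, support_monomial, if_neg ha, support_monomial, if_neg hb,
            Finset.sum_singleton, Finset.sum_singleton, MvPolynomial.coeff_monomial,
            if_pos rfl, MvPolynomial.coeff_monomial, if_pos rfl]
        simp [Finsupp.add_apply]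

lemma polyForm_sum_left (R : ℕ × ℕ → ℝ) {ι : Type*} (s : Finset ι)
    (f : ι → MvPolynomial (Fin 2) ℂ) (q : MvPolynomial (Fin 2) ℂ) :
    polyForm R (∑ i ∈ s, f i) q = ∑ i ∈ s, polyForm R (f i) q := by
  induction s using Finset.cons_induction with
  | empty => simp [polyForm_zero_left]
  | cons i s hi ih => rw [Finset.sum_cons, Finset.sum_cons, polyForm_add_left, ih]

lemma monomial_one_eq (u : Fin 2 →₀ ℕ) :
    (monomial u (1 : ℂ)) = X 0 ^ (u 0) * X 1 ^ (u 1) := by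
  rw [MvPolynomial.X_pow_eq_monomial, MvPolynomial.X_pow_eq_monomial,
      MvPolynomial.monomial_mul, one_mul]
  have hu : (Finsupp.single (0 : Fin 2) (u 0) + Finsupp.single (1 : Fin 2) (u 1)) = u := by
    ext i
    fin_cases i <;> simp [Finsupp.single_apply]
  rw [hu]

lemma memC0_add {p q : MvPolynomial (Fin 2) ℂ} (hp : memC0 p) (hq : memC0 q) :
    memC0 (p + q) := by
  unfold memC0 at *; rw [map_add, hp, hq, add_zero]

lemma memC0_sub {p q : MvPolynomial (Fin 2) ℂ} (hp : memC0 p) (hq : memC0 q) :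
    memC0 (p - q) := by
  unfold memC0 at *; rw [map_sub, hp, hq, sub_zero]

lemma memC0_smul (c : ℂ) {p : MvPolynomial (Fin 2) ℂ} (hp : memC0 p) :
    memC0 (c • p) := by
  unfold memC0 at *
  rw [MvPolynomial.smul_eq_C_mul, map_mul, hp, mul_zero]

lemma polyForm_sub_left (R : ℕ × ℕ → ℝ) (p p' q : MvPolynomial (Fin 2) ℂ) :
    polyForm R (p - p') q = polyForm R p q - polyForm R p' q := by
  rw [sub_eq_add_neg, ← neg_one_smul ℂ p', polyForm_add_left, polyForm_smul_left]
  ring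

/-- if the real 2-sequence `R` is conditionally positive
semi-definite and conditionally bounded with constant `L`, then
`I = {p ∈ C₀[s,t] : [p,p]_R = 0}` is an ideal of the non-unital algebra
`C₀[s,t]` (closed under addition, scalar multiples, and multiplication by
arbitrary elements of `C₀[s,t]`), and `[·,·]_R` descends to a well-defined
inner product on `C₀[s,t]/I`: it is well defined on cosets, Hermitian
symmetric, and positive (definiteness holding by the definition of `I`). -/
theorem stmt6 (R : ℕ × ℕ → ℝ) (L : ℝ) (hLpos : 0 < L)
    (hpsd : ∀ p, memC0 p → 0 ≤ (polyForm R p p).re ∧ (polyForm R p p).im = 0)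
    (hbdd : ∀ (m n : ℕ) (p), memC0 p →
      ‖polyForm R (X 0 ^ m * X 1 ^ n * p) p‖ ≤ L ^ (m + n) * (polyForm R p p).re) :
    -- `I` is an ideal of `C₀[s,t]`:
    (∀ p q, memC0 p → memC0 q → polyForm R p p = 0 → polyForm R q q = 0 →
        polyForm R (p + q) (p + q) = 0) ∧
    (∀ (c : ℂ) (p), memC0 p → polyForm R p p = 0 → polyForm R (c • p) (c • p) = 0) ∧
    (∀ p q, memC0 p → memC0 q → polyForm R p p = 0 →
        polyForm R (q * p) (q * p) = 0) ∧
    -- the form descends to the quotient `C₀[s,t]/I`: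
    (∀ p p' q q', memC0 p → memC0 p' → memC0 q → memC0 q' →
        polyForm R (p - p') (p - p') = 0 → polyForm R (q - q') (q - q') = 0 →
        polyForm R p q = polyForm R p' q') ∧
    -- and the descended form is an inner product: Hermitian and positive
    (∀ p q, memC0 p → memC0 q →
        polyForm R q p = (starRingEnd ℂ) (polyForm R p q)) := by
  -- expansion of the form on `p + c • q`
  have expand : ∀ (p q : MvPolynomial (Fin 2) ℂ) (c : ℂ),
      polyForm R (p + c • q) (p + c • q) = polyForm R p p
        + (starRingEnd ℂ) c * polyForm R p q + c * polyForm R q p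
        + (c * (starRingEnd ℂ) c) * polyForm R q q := by
    intro p q c
    rw [polyForm_add_left, polyForm_add_right, polyForm_add_right,
        polyForm_smul_left, polyForm_smul_left, polyForm_smul_right, polyForm_smul_right]
    ring
  -- Cauchy–Schwarz-type null lemma
  have keynull : ∀ p q, memC0 p → memC0 q → polyForm R q q = 0 → polyForm R p q = 0 := by
    intro p q hp hq hqq
    by_contra hB0
    set B := polyForm R p q with hBdef
    have hns : Complex.normSq B ≠ 0 := by
      simpa [Complex.normSq_eq_zero] using hB0
    set t : ℝ := ((polyForm R p p).re + 1) / (2 * Complex.normSq B) with ht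
    set r : MvPolynomial (Fin 2) ℂ := p + ((-(t : ℂ)) * B) • q with hr
    have hrC0 : memC0 r := memC0_add hp (memC0_smul _ hq)
    have hqp : polyForm R q p = (starRingEnd ℂ) B := polyForm_conj R p q
    have h1 : polyForm R r r = polyForm R p p - ((2 * t * Complex.normSq B : ℝ) : ℂ) := by
      rw [hr, expand, hqq, hqp, mul_zero, add_zero, map_mul, map_neg, Complex.conj_ofReal]
      have h2 : B * (starRingEnd ℂ) B = ((Complex.normSq B : ℝ) : ℂ) := Complex.mul_conj B
      push_cast
      rw [← h2]
      ring
    have hre := (hpsd r hrC0).1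
    rw [h1, Complex.sub_re, Complex.ofReal_re] at hre
    have h3 : 2 * t * Complex.normSq B = (polyForm R p p).re + 1 := by
      rw [ht]; field_simp
    rw [h3] at hre
    linarith
  -- the multiplicative (ideal) property
  have keymul : ∀ p q, memC0 p → polyForm R p p = 0 → polyForm R (q * p) (q * p) = 0 := by
    intro p q hp hpp
    have hre : (polyForm R p p).re = 0 := by rw [hpp]; simp
    set w : MvPolynomial (Fin 2) ℂ := q * MvPolynomial.map (starRingEnd ℂ) q with hw
    have h1 : polyForm R (q * p) (q * p) = polyForm R (w * p) p := by
      rw [polyForm_eq_Lfun, polyForm_eq_Lfun, map_mul (MvPolynomial.map (starRingEnd ℂ)), hw]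
      congr 1
      ring
    have h2 : polyForm R (w * p) p
        = ∑ u ∈ w.support, MvPolynomial.coeff u w
            * polyForm R (X 0 ^ (u 0) * X 1 ^ (u 1) * p) p := by
      conv_lhs => rw [← MvPolynomial.support_sum_monomial_coeff w]
      rw [Finset.sum_mul, polyForm_sum_left]
      refine Finset.sum_congr rfl fun u _ => ?_
      have hmono : (monomial u (MvPolynomial.coeff u w))
          = (MvPolynomial.coeff u w) • monomial u (1 : ℂ) := by
        rw [MvPolynomial.smul_monomial, smul_eq_mul, mul_one]
      rw [hmono, smul_mul_assoc, polyForm_smul_left, monomial_one_eq]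
    have h3 : ‖polyForm R (w * p) p‖ = 0 := by
      rw [h2]
      have hterm : ∀ u ∈ w.support,
          ‖MvPolynomial.coeff u w
            * polyForm R (X 0 ^ (u 0) * X 1 ^ (u 1) * p) p‖ = 0 := by
        intro u _
        rw [norm_mul]
        have hb := hbdd (u 0) (u 1) p hp
        rw [hre, mul_zero] at hb
        have hnn := norm_nonneg (polyForm R (X 0 ^ (u 0) * X 1 ^ (u 1) * p) p)
        rw [le_antisymm hb hnn, mul_zero]
      have := le_trans (norm_sum_le w.support
        (fun u => MvPolynomial.coeff u w * polyForm R (X 0 ^ (u 0) * X 1 ^ (u 1) * p) p))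
        (le_of_eq (Finset.sum_eq_zero hterm))
      exact le_antisymm this (norm_nonneg _)
    rw [h1]
    exact norm_eq_zero.mp h3
  refine ⟨?_, ?_, ?_, ?_, ?_⟩
  · -- closed under addition
    intro p q hp hq hpp hqq
    have hpq : polyForm R p q = 0 := keynull p q hp hq hqq
    have hqp : polyForm R q p = 0 := by rw [polyForm_conj, hpq, map_zero]
    rw [polyForm_add_left, polyForm_add_right, polyForm_add_right, hpp, hqq, hpq, hqp]
    ring
  · -- closed under scalar multiplication
    intro c p _ hpp
    rw [polyForm_smul_left, polyForm_smul_right, hpp, mul_zero, mul_zero]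
  · -- closed under multiplication
    intro p q hp _ hpp
    exact keymul p q hp hpp
  · -- well-defined on cosets
    intro p p' q q' hp hp' hq hq' hdp hdq
    have hA : polyForm R (p - p') q = 0 := by
      rw [polyForm_conj R q (p - p'), keynull q (p - p') hq (memC0_sub hp hp') hdp, map_zero]
    have hB : polyForm R p' (q - q') = 0 :=
      keynull p' (q - q') hp' (memC0_sub hq hq') hdq
    rw [polyForm_sub_left] at hA
    have hB' : polyForm R p' q - polyForm R p' q' = 0 := by
      have : polyForm R (q - q') p' = 0 := by
        rw [polyForm_conj R p' (q - q'), hB, map_zero]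
      rw [polyForm_sub_left] at this
      have e1 : polyForm R q p' = (starRingEnd ℂ) (polyForm R p' q) := polyForm_conj R p' q
      have e2 : polyForm R q' p' = (starRingEnd ℂ) (polyForm R p' q') := polyForm_conj R p' q'
      rw [e1, e2, ← map_sub] at this
      simpa using congrArg (starRingEnd ℂ) this
    linear_combination hA + hB'
  · -- Hermitian symmetry
    intro p q _ _
    exact polyForm_conj R p q
end

section
/- Let R be a real 2-sequence indexed by ℤ₊² \ {(0,0)} that is conditionally positive semi-definite and conditionally bounded with constant L, let I = {p ∈ C₀[s,t] : [p,p]_R = 0}, and let H be the Hilbert space completion of C₀[s,t]/I with respect to the induced inner product. Then the map T₁ : p + I ↦ s·p + I is well-defined, satisfies ‖T₁h‖ ≤ L‖h‖ on C₀[s,t]/I, and extends to a bounded self-adjoint operator on H. -/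
open MvPolynomial

lemma polyForm_X0_left (R : ℕ × ℕ → ℝ) (p q' : MvPolynomial (Fin 2) ℂ) :
    polyForm R (X 0 * p) q' = ∑ d ∈ p.support, ∑ e ∈ q'.support,
      MvPolynomial.coeff d p * (starRingEnd ℂ) (MvPolynomial.coeff e q') *
        ((R (d 0 + e 0 + 1, d 1 + e 1) : ℝ) : ℂ) := by
  unfold polyForm
  rw [support_X_mul, Finset.sum_map]
  refine Finset.sum_congr rfl fun d _ => Finset.sum_congr rfl fun e _ => ?_
  have h1 : (addLeftEmbedding (Finsupp.single (0 : Fin 2) 1)) d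
      = Finsupp.single (0 : Fin 2) 1 + d := rfl
  rw [h1, coeff_X_mul]
  have h0 : ((Finsupp.single (0 : Fin 2) 1 + d : Fin 2 →₀ ℕ)) 0 + e 0 = d 0 + e 0 + 1 := by
    simp [Finsupp.add_apply]; omega
  have h1' : ((Finsupp.single (0 : Fin 2) 1 + d : Fin 2 →₀ ℕ)) 1 + e 1 = d 1 + e 1 := by
    simp [Finsupp.add_apply, Finsupp.single_apply]
  rw [h0, h1']

lemma polyForm_X0_right (R : ℕ × ℕ → ℝ) (p q' : MvPolynomial (Fin 2) ℂ) :
    polyForm R p (X 0 * q') = ∑ d ∈ p.support, ∑ e ∈ q'.support,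
      MvPolynomial.coeff d p * (starRingEnd ℂ) (MvPolynomial.coeff e q') *
        ((R (d 0 + e 0 + 1, d 1 + e 1) : ℝ) : ℂ) := by
  unfold polyForm
  rw [support_X_mul]
  refine Finset.sum_congr rfl fun d _ => ?_
  rw [Finset.sum_map]
  refine Finset.sum_congr rfl fun e _ => ?_
  have h1 : (addLeftEmbedding (Finsupp.single (0 : Fin 2) 1)) e
      = Finsupp.single (0 : Fin 2) 1 + e := rfl
  rw [h1, coeff_X_mul]
  have h0 : d 0 + ((Finsupp.single (0 : Fin 2) 1 + e : Fin 2 →₀ ℕ)) 0 = d 0 + e 0 + 1 := by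
    simp [Finsupp.add_apply]; omega
  have h1' : d 1 + ((Finsupp.single (0 : Fin 2) 1 + e : Fin 2 →₀ ℕ)) 1 = d 1 + e 1 := by
    simp [Finsupp.add_apply, Finsupp.single_apply]
  rw [h0, h1']

lemma polyForm_swap_X0 (R : ℕ × ℕ → ℝ) (p p' : MvPolynomial (Fin 2) ℂ) :
    polyForm R p' (X 0 * p) = polyForm R (X 0 * p') p := by
  rw [polyForm_X0_left, polyForm_X0_right]

lemma polyForm_X0_X0 (R : ℕ × ℕ → ℝ) (p q' : MvPolynomial (Fin 2) ℂ) :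
    polyForm R (X 0 * p) (X 0 * q') = polyForm R (X 0 * (X 0 * p)) q' := by
  rw [polyForm_X0_right (p := X 0 * p), polyForm_X0_left (p := X 0 * p)]

/-- `C₀[s,t]` as a submodule. -/
noncomputable def C0sub : Submodule ℂ (MvPolynomial (Fin 2) ℂ) where
  carrier := {p | memC0 p}
  add_mem' := by intro a b ha hb; simp only [memC0, Set.mem_setOf_eq, map_add] at *; rw [ha, hb, add_zero]
  zero_mem' := by simp [memC0]
  smul_mem' := by
    intro c p hp
    simp only [memC0, Set.mem_setOf_eq] at *
    rw [MvPolynomial.smul_eq_C_mul, map_mul, hp, mul_zero]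

lemma memC0_X0_mul (p : MvPolynomial (Fin 2) ℂ) : memC0 (X 0 * p) := by
  simp [memC0, map_mul]

/-- let `R` be conditionally positive semi-definite and
conditionally bounded with constant `L`, `I = {p ∈ C₀[s,t] : [p,p]_R = 0}`, and
let `K` be the Hilbert space completion of `C₀[s,t]/I` for the induced inner
product (encoded by a linear map `q : ℂ[s,t] → K` realizing the form on
`C₀[s,t]` and having dense span there). Then `T₁ : p + I ↦ s·p + I` is
well-defined, satisfies `‖T₁ h‖ ≤ L‖h‖` on `C₀[s,t]/I`, and extends to a
bounded self-adjoint operator on `K` of norm at most `L`. -/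
theorem stmt7 (R : ℕ × ℕ → ℝ) (L : ℝ) (hLpos : 0 < L)
    (hpsd : ∀ p, memC0 p → 0 ≤ (polyForm R p p).re ∧ (polyForm R p p).im = 0)
    (hbdd : ∀ (m n : ℕ) (p), memC0 p →
      ‖polyForm R (X 0 ^ m * X 1 ^ n * p) p‖ ≤ L ^ (m + n) * (polyForm R p p).re)
    (K : Type*) [NormedAddCommGroup K] [InnerProductSpace ℂ K] [CompleteSpace K]
    (q : MvPolynomial (Fin 2) ℂ →ₗ[ℂ] K)
    (hq : ∀ p p', memC0 p → memC0 p' → (inner ℂ (q p') (q p) : ℂ) = polyForm R p p')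
    (hdense : Dense ((Submodule.span ℂ (q '' {p | memC0 p}) : Submodule ℂ K) : Set K)) :
    -- `T₁` is well defined on `C₀[s,t]/I`:
    (∀ p p', memC0 p → memC0 p' → q p = q p' → q (X 0 * p) = q (X 0 * p')) ∧
    -- `T₁` is bounded by `L` on `C₀[s,t]/I`:
    (∀ p, memC0 p → ‖q (X 0 * p)‖ ≤ L * ‖q p‖) ∧
    -- `T₁` extends to a bounded self-adjoint operator on `K`:
    (∃ T : K →L[ℂ] K, IsSelfAdjoint T ∧ ‖T‖ ≤ L ∧
        ∀ p, memC0 p → T (q p) = q (X 0 * p)) := by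
  -- norms via the form
  have hnorm : ∀ p, memC0 p → ‖q p‖ ^ 2 = (polyForm R p p).re := by
    intro p hp
    have h := @inner_self_eq_norm_sq ℂ K _ _ _ (q p)
    rw [RCLike.re_to_complex] at h
    rw [← hq p p hp hp, h]
  -- part 2
  have h2 : ∀ p, memC0 p → ‖q (X 0 * p)‖ ≤ L * ‖q p‖ := by
    intro p hp
    have hX : memC0 (X 0 * p) := memC0_X0_mul p
    have key : polyForm R (X 0 * p) (X 0 * p) = polyForm R (X 0 ^ 2 * X 1 ^ 0 * p) p := by
      rw [polyForm_X0_X0]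
      congr 1
      ring
    have h1 : ‖q (X 0 * p)‖ ^ 2 ≤ (L * ‖q p‖) ^ 2 := by
      rw [hnorm _ hX, key]
      calc (polyForm R (X 0 ^ 2 * X 1 ^ 0 * p) p).re
          ≤ ‖polyForm R (X 0 ^ 2 * X 1 ^ 0 * p) p‖ := Complex.re_le_norm _
        _ ≤ L ^ (2 + 0) * (polyForm R p p).re := hbdd 2 0 p hp
        _ = (L * ‖q p‖) ^ 2 := by rw [← hnorm p hp]; ring
    exact le_of_pow_le_pow_left₀ two_ne_zero (by positivity) h1
  -- part 1
  have h1 : ∀ p p', memC0 p → memC0 p' → q p = q p' → q (X 0 * p) = q (X 0 * p') := by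
    intro p p' hp hp' hqq
    have hs : memC0 (p - p') := by
      simp only [memC0, map_sub] at *
      rw [hp, hp', sub_zero]
    have hz : q (p - p') = 0 := by rw [map_sub, hqq, sub_self]
    have := h2 (p - p') hs
    rw [hz, norm_zero, mul_zero] at this
    have h0 : q (X 0 * (p - p')) = 0 :=
      norm_le_zero_iff.mp this
    rw [mul_sub, map_sub, sub_eq_zero] at h0
    exact h0
  refine ⟨h1, h2, ?_⟩
  -- part 3
  set f : C0sub →ₗ[ℂ] K := q.comp C0sub.subtype with hf
  set A : C0sub →ₗ[ℂ] K :=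
    q.comp ((LinearMap.mulLeft ℂ (X 0 : MvPolynomial (Fin 2) ℂ)).comp C0sub.subtype) with hA
  have hAval : ∀ p : C0sub, A p = q (X 0 * (p : MvPolynomial (Fin 2) ℂ)) := fun p => rfl
  have hfval : ∀ p : C0sub, f p = q (p : MvPolynomial (Fin 2) ℂ) := fun p => rfl
  have hker : LinearMap.ker f ≤ LinearMap.ker A := by
    intro p hp
    rw [LinearMap.mem_ker] at *
    have hb := h2 p p.2
    rw [← hfval, hp, norm_zero, mul_zero] at hb
    rw [hAval]
    exact norm_le_zero_iff.mp hb
  set B : (LinearMap.range f) →ₗ[ℂ] K :=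
    (Submodule.liftQ (LinearMap.ker f) A hker).comp (f.quotKerEquivRange).symm.toLinearMap with hB
  have hBval : ∀ p : C0sub, B ⟨f p, LinearMap.mem_range_self f p⟩ = A p := by
    intro p
    have h : f.quotKerEquivRange (Submodule.Quotient.mk p) = ⟨f p, LinearMap.mem_range_self f p⟩ :=
      Subtype.ext (f.quotKerEquivRange_apply_mk p)
    rw [hB, LinearMap.comp_apply, LinearEquiv.coe_toLinearMap, ← h, LinearEquiv.symm_apply_apply,
      Submodule.liftQ_apply]
  have hBbound : ∀ x : LinearMap.range f, ‖B x‖ ≤ L * ‖x‖ := by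
    rintro ⟨x, hx⟩
    obtain ⟨p, rfl⟩ := LinearMap.mem_range.mp hx
    rw [hBval, hAval]
    have : ‖(⟨f p, LinearMap.mem_range_self f p⟩ : LinearMap.range f)‖ = ‖q (p : MvPolynomial (Fin 2) ℂ)‖ := rfl
    rw [this]
    exact h2 p p.2
  set T₀ : (LinearMap.range f) →L[ℂ] K := B.mkContinuous L hBbound with hT₀
  have hrange : (LinearMap.range f : Set K) = (Submodule.span ℂ (q '' {p | memC0 p}) : Submodule ℂ K) := by
    have h1' : LinearMap.range f = Submodule.map q C0sub := by
      rw [hf, LinearMap.range_comp, Submodule.range_subtype]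
    have h2' : Submodule.span ℂ (q '' {p | memC0 p}) = Submodule.map q C0sub := by
      have : q '' {p | memC0 p} = (Submodule.map q C0sub : Set K) := rfl
      rw [this, Submodule.span_eq]
    rw [h1', h2']
  have hmem : ∀ x ∈ (Submodule.span ℂ (q '' {p | memC0 p}) : Submodule ℂ K),
      ∃ p : MvPolynomial (Fin 2) ℂ, memC0 p ∧ q p = x := by
    intro x hx
    rw [← SetLike.mem_coe, ← hrange, SetLike.mem_coe, LinearMap.mem_range] at hx
    obtain ⟨p, rfl⟩ := hx
    exact ⟨p, p.2, rfl⟩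
  set e : (LinearMap.range f) →L[ℂ] K := (LinearMap.range f).subtypeL with he
  have hdr : DenseRange e := by
    have : Set.range e = (LinearMap.range f : Set K) := Subtype.range_coe
    rw [DenseRange, this, hrange]
    exact hdense
  have hui : IsUniformInducing e := isometry_subtype_coe.isUniformInducing
  set T : K →L[ℂ] K := T₀.extend e with hT
  have hText : ∀ p : C0sub, T (q (p : MvPolynomial (Fin 2) ℂ)) = q (X 0 * (p : MvPolynomial (Fin 2) ℂ)) := by
    intro p
    have h : q (p : MvPolynomial (Fin 2) ℂ) = e ⟨f p, LinearMap.mem_range_self f p⟩ := rfl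
    rw [h, hT, ContinuousLinearMap.extend_eq _ hdr hui]
    have : T₀ ⟨f p, LinearMap.mem_range_self f p⟩ = B ⟨f p, LinearMap.mem_range_self f p⟩ := rfl
    rw [this, hBval, hAval]
  have hTq : ∀ p, memC0 p → T (q p) = q (X 0 * p) := fun p hp => hText ⟨p, hp⟩
  -- norm bound by density
  have hTnorm : ∀ x : K, ‖T x‖ ≤ L * ‖x‖ := by
    intro x
    have hclosed : IsClosed {y : K | ‖T y‖ ≤ L * ‖y‖} :=
      isClosed_le (T.continuous.norm) (continuous_const.mul continuous_norm)
    have hsub : (Submodule.span ℂ (q '' {p | memC0 p}) : Set K) ⊆ {y : K | ‖T y‖ ≤ L * ‖y‖} := by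
      intro y hy
      obtain ⟨p, hp, rfl⟩ := hmem y hy
      simp only [Set.mem_setOf_eq, hTq p hp]
      exact h2 p hp
    have : closure (Submodule.span ℂ (q '' {p | memC0 p}) : Set K) ⊆ {y : K | ‖T y‖ ≤ L * ‖y‖} :=
      hclosed.closure_subset_iff.mpr hsub
    rw [hdense.closure_eq] at this
    exact this (Set.mem_univ x)
  -- self-adjoint
  have hsym : ∀ x y : K, (inner ℂ (T x) y : ℂ) = inner ℂ x (T y) := by
    have hgen : ∀ p p', memC0 p → memC0 p' →
        (inner ℂ (T (q p)) (q p') : ℂ) = inner ℂ (q p) (T (q p')) := by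
      intro p p' hp hp'
      rw [hTq p hp, hTq p' hp']
      rw [hq p' (X 0 * p) hp' (memC0_X0_mul p), hq (X 0 * p') p (memC0_X0_mul p') hp]
      exact polyForm_swap_X0 R p p'
    have step1 : ∀ p, memC0 p → ∀ y : K, (inner ℂ (T (q p)) y : ℂ) = inner ℂ (q p) (T y) := by
      intro p hp
      have heq : (fun y : K => (inner ℂ (T (q p)) y : ℂ)) = fun y : K => (inner ℂ (q p) (T y) : ℂ) := by
        apply Continuous.ext_on hdense
        · exact continuous_const.inner continuous_id
        · exact continuous_const.inner T.continuous
        · intro y hy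
          obtain ⟨p', hp', rfl⟩ := hmem y hy
          exact hgen p p' hp hp'
      exact fun y => congrFun heq y
    intro x y
    have heq : (fun x : K => (inner ℂ (T x) y : ℂ)) = fun x : K => (inner ℂ x (T y) : ℂ) := by
      apply Continuous.ext_on hdense
      · exact (T.continuous.inner continuous_const)
      · exact continuous_id.inner continuous_const
      · intro x hx
        obtain ⟨p, hp, rfl⟩ := hmem x hx
        exact step1 p hp y
    exact congrFun heq x
  refine ⟨T, ?_, ?_, hTq⟩
  · rw [ContinuousLinearMap.isSelfAdjoint_iff_isSymmetric]
    exact fun x y => hsym x y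
  · exact T.opNorm_le_bound hLpos.le hTnorm
end

section
/- Let ρ be a finite signed Borel measure and ρ₁ a finite positive Borel measure on ℝ², both compactly supported, satisfying t·dρ₁(s,t) = s·dρ(s,t). For ε > 0 let Ω_ε = {(s,t) : |s| > ε and |t| > ε} and define σ_ε by dσ_ε(s,t) = χ_{Ω_ε}(s,t)/(st) dρ(s,t). Then σ_ε is a finite positive measure. -/
open MeasureTheory

/-- let `ρ = ρp − ρm` be a finite signed Borel measure (given via
its decomposition into finite positive measures) and `ρ₁` a finite positive
Borel measure on `ℝ²`, all compactly supported, with `t·dρ₁ = s·dρ`, i.e.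
`∫ t·h dρ₁ = ∫ s·h dρ` for every bounded Borel `h`. For `ε > 0`, with
`Ω_ε = {(s,t) : |s| > ε, |t| > ε}` and `dσ_ε = χ_{Ω_ε}/(st) dρ`, the signed
measure `σ_ε` is a (finite) positive measure: `σ_ε(E) ≥ 0` for every Borel set
`E`. -/
theorem stmt9 (ρ₁ ρp ρm : Measure (ℝ × ℝ))
    [IsFiniteMeasure ρ₁] [IsFiniteMeasure ρp] [IsFiniteMeasure ρm]
    (hcpt : ∃ K : Set (ℝ × ℝ), IsCompact K ∧ ρ₁ Kᶜ = 0 ∧ ρp Kᶜ = 0 ∧ ρm Kᶜ = 0)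
    (hrel : ∀ h : ℝ × ℝ → ℝ, Measurable h → (∃ C : ℝ, ∀ p, |h p| ≤ C) →
      ∫ p, p.2 * h p ∂ρ₁ = (∫ p, p.1 * h p ∂ρp) - ∫ p, p.1 * h p ∂ρm)
    (ε : ℝ) (hε : 0 < ε) :
    ∀ E : Set (ℝ × ℝ), MeasurableSet E →
      0 ≤ (∫ p in E, Set.indicator {q : ℝ × ℝ | ε < |q.1| ∧ ε < |q.2|}
              (fun q => (q.1 * q.2)⁻¹) p ∂ρp)
          - ∫ p in E, Set.indicator {q : ℝ × ℝ | ε < |q.1| ∧ ε < |q.2|}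
              (fun q => (q.1 * q.2)⁻¹) p ∂ρm := by
  intro E hE
  set Ω : Set (ℝ × ℝ) := {q : ℝ × ℝ | ε < |q.1| ∧ ε < |q.2|} with hΩdef
  have hΩm : MeasurableSet Ω := by
    have h1 : MeasurableSet {q : ℝ × ℝ | ε < |q.1|} :=
      measurableSet_lt measurable_const measurable_fst.abs
    have h2 : MeasurableSet {q : ℝ × ℝ | ε < |q.2|} :=
      measurableSet_lt measurable_const measurable_snd.abs
    exact h1.inter h2
  set h : ℝ × ℝ → ℝ := Set.indicator (Ω ∩ E) (fun q => (q.1 ^ 2 * q.2)⁻¹) with hhdef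
  have hmeas : Measurable h := by
    apply Measurable.indicator _ (hΩm.inter hE)
    exact ((measurable_fst.pow_const 2).mul measurable_snd).inv
  have hbd : ∃ C : ℝ, ∀ p, |h p| ≤ C := by
    refine ⟨(ε ^ 2 * ε)⁻¹, fun p => ?_⟩
    by_cases hp : p ∈ Ω ∩ E
    · have hs : ε < |p.1| := hp.1.1
      have ht : ε < |p.2| := hp.1.2
      have hpos : 0 < ε ^ 2 * ε := by positivity
      rw [hhdef]
      simp only [Set.indicator_of_mem hp]
      rw [abs_inv, abs_mul, abs_pow]
      apply inv_anti₀ hpos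
      have h1 : ε ^ 2 ≤ |p.1| ^ 2 := by
        apply pow_le_pow_left₀ hε.le hs.le
      nlinarith [abs_nonneg p.1, abs_nonneg p.2]
    · rw [hhdef]
      simp only [Set.indicator_of_notMem hp, abs_zero]
      positivity
  have key := hrel h hmeas hbd
  have h1 : 0 ≤ ∫ p, p.2 * h p ∂ρ₁ := by
    apply integral_nonneg
    intro p
    by_cases hp : p ∈ Ω ∩ E
    · have ht : ε < |p.2| := hp.1.2
      have ht0 : p.2 ≠ 0 := by
        intro h0; rw [h0] at ht; simp at ht; linarith
      rw [hhdef]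
      simp only [Set.indicator_of_mem hp]
      rw [mul_inv, ← mul_assoc, mul_comm p.2, mul_assoc]
      rw [mul_inv_cancel₀ ht0, mul_one]
      positivity
    · rw [hhdef]
      simp only [Set.indicator_of_notMem hp, mul_zero]
      exact le_refl 0
  have heq : ∀ p : ℝ × ℝ,
      Set.indicator E (Set.indicator Ω (fun q => (q.1 * q.2)⁻¹)) p = p.1 * h p := by
    intro p
    rw [Set.indicator_indicator, hhdef]
    by_cases hp : p ∈ Ω ∩ E
    · have hpE : p ∈ E ∩ Ω := ⟨hp.2, hp.1⟩
      rw [Set.indicator_of_mem hpE, Set.indicator_of_mem hp]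
      have hs : ε < |p.1| := hp.1.1
      have hs0 : p.1 ≠ 0 := by
        intro h0; rw [h0] at hs; simp at hs; linarith
      symm
      rw [pow_two, mul_assoc, mul_inv, ← mul_assoc, mul_inv_cancel₀ hs0, one_mul]
    · have hpE : p ∉ E ∩ Ω := fun h0 => hp ⟨h0.2, h0.1⟩
      rw [Set.indicator_of_notMem hpE, Set.indicator_of_notMem hp, mul_zero]
  have h2 : ∀ μ : Measure (ℝ × ℝ),
      (∫ p in E, Set.indicator Ω (fun q => (q.1 * q.2)⁻¹) p ∂μ) = ∫ p, p.1 * h p ∂μ := by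
    intro μ
    rw [← integral_indicator hE]
    exact integral_congr_ae (Filter.Eventually.of_forall heq)
  rw [h2 ρp, h2 ρm]
  linarith
end
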